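/- Let λ(t) = exp(-t^{-r}) for t > 0 (with λ(0)=0) and r > 0, and Λ(t) = ∫_0^t λ(s) ds. Then for all t ∈ (0, T] with T small enough, λ(t)/Λ(t) ≥ λ'(t)/λ(t), i.e., the quotient (λ'(t)/λ(t)) / (λ(t)/Λ(t)) is bounded: there exists c > 0 such that λ'(t)/λ(t) ≤ c λ(t)/Λ(t) on (0,T]. -/

import Mathlib

open Set Real MeasureTheory

private lemma lam_mono (r : ℝ) (hr : 0 < r) :
    Monotone (fun t : ℝ => if t ≤ 0 then 0 else Real.exp (-t ^ (-r))) := by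
  intro x y hxy
  dsimp only
  by_cases hy : y ≤ 0
  · rw [if_pos (hxy.trans hy), if_pos hy]
  · rw [if_neg hy]
    by_cases hx : x ≤ 0
    · rw [if_pos hx]; positivity
    · rw [if_neg hx]
      have hx' : 0 < x := not_le.mp hx
      exact Real.exp_le_exp.mpr (neg_le_neg
        (Real.rpow_le_rpow_of_nonpos hx' hxy (neg_nonpos.mpr hr.le)))

private lemma f_hasDeriv (r : ℝ) {s : ℝ} (hs : 0 < s) :
    HasDerivAt (fun x : ℝ => Real.exp (-x ^ (-r)))
      (r * s ^ (-r - 1) * Real.exp (-s ^ (-r))) s := by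
  have h1 : HasDerivAt (fun x : ℝ => x ^ (-r)) (-r * s ^ (-r - 1)) s :=
    Real.hasDerivAt_rpow_const (Or.inl hs.ne')
  have h2 : HasDerivAt (fun x : ℝ => -(x ^ (-r))) (r * s ^ (-r - 1)) s := by
    exact h1.neg.congr_deriv (by ring)
  have h3 := (Real.hasDerivAt_exp (-s ^ (-r))).comp s h2
  refine h3.congr_deriv ?_
  ring

theorem exp_shape_function_upper_bound (r : ℝ) (hr : 0 < r) :
    let lam : ℝ → ℝ := fun t => if t ≤ 0 then 0 else Real.exp (-t ^ (-r))
    ∃ c > (0:ℝ), ∃ T > (0:ℝ), ∀ t ∈ Ioc 0 T,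
      deriv lam t / lam t ≤ c * (lam t / ∫ s in (0:ℝ)..t, lam s) := by
  intro lam
  set f : ℝ → ℝ := fun x : ℝ => Real.exp (-x ^ (-r)) with hf
  -- interval integrability of lam
  have hint : ∀ a b : ℝ, IntervalIntegrable lam volume a b := fun a b =>
    (lam_mono r hr).intervalIntegrable
  -- lam equals f on positive reals, locally
  have hlam_eq : ∀ {x : ℝ}, 0 < x → lam x = f x := fun hx => if_neg (not_le.mpr hx)
  -- derivative of lam at positive points
  have hderiv : ∀ {t : ℝ}, 0 < t → deriv lam t = r * t ^ (-r - 1) * f t := by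
    intro t ht
    have heq : lam =ᶠ[nhds t] f := by
      filter_upwards [(isOpen_lt continuous_const continuous_id).mem_nhds ht] with x hx
      exact hlam_eq hx
    rw [Filter.EventuallyEq.deriv_eq heq]
    exact (f_hasDeriv r ht).deriv
  -- antiderivative bound: define g
  set g : ℝ → ℝ := fun s => s ^ (r + 1) * f s / r with hg
  have hg_deriv : ∀ {s : ℝ}, 0 < s →
      HasDerivAt g (((r + 1) * s ^ r / r + 1) * f s) s := by
    intro s hs
    have h1 : HasDerivAt (fun x : ℝ => x ^ (r + 1)) ((r + 1) * s ^ r) s := by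
      have := Real.hasDerivAt_rpow_const (p := r + 1) (Or.inl hs.ne')
      simpa using this
    have h2 := (h1.mul (f_hasDeriv r hs)).div_const r
    have hpow : s ^ (r + 1) * s ^ (-r - 1) = 1 := by
      rw [← Real.rpow_add hs]
      norm_num
    refine h2.congr_deriv ?_
    have key : s ^ (r + 1) * (r * s ^ (-r - 1) * rexp (-s ^ (-r))) = r * rexp (-s ^ (-r)) := by
      calc s ^ (r + 1) * (r * s ^ (-r - 1) * rexp (-s ^ (-r)))
          = (s ^ (r + 1) * s ^ (-r - 1)) * (r * rexp (-s ^ (-r))) := by ring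
        _ = r * rexp (-s ^ (-r)) := by rw [hpow, one_mul]
    rw [key]
    simp only [hf]
    field_simp
  -- pointwise: lam s ≤ 1
  have hlam_le_one : ∀ s : ℝ, lam s ≤ 1 := by
    intro s
    by_cases hs : s ≤ 0
    · simp [lam, hs]
    · rw [hlam_eq (not_le.mp hs)]
      exact Real.exp_le_one_iff.mpr (neg_nonpos.mpr (Real.rpow_nonneg (not_le.mp hs).le _))
  have hlam_nonneg : ∀ s : ℝ, 0 ≤ lam s := by
    intro s; by_cases hs : s ≤ 0
    · simp [lam, hs]
    · rw [hlam_eq (not_le.mp hs)]; positivity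
  -- the key integral bound
  have hΛ_le : ∀ {t : ℝ}, 0 < t → (∫ s in (0:ℝ)..t, lam s) ≤ g t := by
    intro t ht
    refine le_of_forall_pos_le_add ?_
    intro ε hε
    set δ := min ε (t / 2) with hδdef
    have hδ0 : 0 < δ := lt_min hε (by linarith)
    have hδt : δ ≤ t := (min_le_right _ _).trans (by linarith)
    have hsplit : (∫ s in (0:ℝ)..δ, lam s) + (∫ s in δ..t, lam s) = ∫ s in (0:ℝ)..t, lam s :=
      intervalIntegral.integral_add_adjacent_intervals (hint 0 δ) (hint δ t)
    have h1 : (∫ s in (0:ℝ)..δ, lam s) ≤ δ := by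
      calc (∫ s in (0:ℝ)..δ, lam s) ≤ ∫ _ in (0:ℝ)..δ, (1:ℝ) :=
            intervalIntegral.integral_mono_on hδ0.le (hint 0 δ) intervalIntegrable_const
              (fun x _ => hlam_le_one x)
        _ = δ := by simp
    have h2 : (∫ s in δ..t, lam s) ≤ g t - g δ := by
      have hcont : ∀ x ∈ uIcc δ t, 0 < x := by
        intro x hx
        rw [uIcc_of_le hδt] at hx
        exact lt_of_lt_of_le hδ0 hx.1
      have hG_int : IntervalIntegrable (fun s => ((r + 1) * s ^ r / r + 1) * f s) volume δ t := by
        apply ContinuousOn.intervalIntegrable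
        intro x hx
        have hx0 := hcont x hx
        have c1 : ContinuousAt (fun s : ℝ => s ^ r) x :=
          Real.continuousAt_rpow_const x r (Or.inl hx0.ne')
        have c2 : ContinuousAt (fun s : ℝ => s ^ (-r)) x :=
          Real.continuousAt_rpow_const x (-r) (Or.inl hx0.ne')
        have hca : ContinuousAt (fun s : ℝ => ((r + 1) * s ^ r / r + 1) * f s) x := by
          simp only [hf]
          exact (((c1.const_mul (r + 1)).div_const r).add continuousAt_const).mul (c2.neg.rexp)
        exact hca.continuousWithinAt
      have hftc : (∫ s in δ..t, ((r + 1) * s ^ r / r + 1) * f s) = g t - g δ :=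
        intervalIntegral.integral_eq_sub_of_hasDerivAt
          (fun x hx => hg_deriv (hcont x hx)) hG_int
      rw [← hftc]
      apply intervalIntegral.integral_mono_on hδt (hint δ t) hG_int
      intro x hx
      have hx0 : 0 < x := lt_of_lt_of_le hδ0 hx.1
      rw [hlam_eq hx0]
      have h1le : (1:ℝ) ≤ (r + 1) * x ^ r / r + 1 := by
        have : 0 ≤ (r + 1) * x ^ r / r := by positivity
        linarith
      nlinarith [Real.exp_pos (-x ^ (-r))]
    have hgδ : 0 ≤ g δ := by
      have := Real.exp_pos (-δ ^ (-r))
      have := Real.rpow_pos_of_pos hδ0 (r + 1)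
      simp only [hg]
      positivity
    have hδε : δ ≤ ε := min_le_left _ _
    linarith
  -- positivity of the integral
  have hΛ_pos : ∀ {t : ℝ}, 0 < t → 0 < ∫ s in (0:ℝ)..t, lam s := by
    intro t ht
    apply intervalIntegral.intervalIntegral_pos_of_pos_on (hint 0 t) _ ht
    intro x hx
    rw [hlam_eq hx.1]
    positivity
  refine ⟨1, one_pos, 1, one_pos, ?_⟩
  rintro t ⟨ht0, _⟩
  have hft : 0 < f t := Real.exp_pos _
  have hgt : 0 < g t := by
    have := Real.rpow_pos_of_pos ht0 (r + 1)
    simp only [hg]; positivity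
  rw [hderiv ht0, hlam_eq ht0, one_mul]
  rw [mul_div_assoc, div_self hft.ne', mul_one]
  have step1 : f t / g t ≤ f t / ∫ s in (0:ℝ)..t, lam s :=
    div_le_div_of_nonneg_left hft.le (hΛ_pos ht0) (hΛ_le ht0)
  refine le_trans ?_ step1
  have : f t / g t = r * t ^ (-r - 1) := by
    have htpow : 0 < t ^ (r + 1) := Real.rpow_pos_of_pos ht0 _
    rw [show (-r - 1 : ℝ) = -(r + 1) by ring, Real.rpow_neg ht0.le]
    simp only [hg]
    field_simp
  rw [this]
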